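/- Let X ⊂ ℝ^p and Y ⊂ ℝ^q be compact sets, let α, β be finite positive Radon measures on X, Y with m(α) = m(β) > 0, and fix r > 0. Let F_r = {M ∈ ℝ^{q×p} : ‖M‖_F ≤ r}. Then a coupling π* ∈ Π(α,β) minimizes the Gromov–Wasserstein inner-product problem GW-IP(α,β): min over π ∈ Π(α,β) of ∫∫ (⟨x,x'⟩ − ⟨y,y'⟩)² dπ(x,y) dπ(x',y'), if and only if π* minimizes over Π(α,β) the function π ↦ min over M ∈ F_r of −∫_{X×Y} ⟨Mx,y⟩ dπ(x,y). That is, the two problems have the same minimizers in π. -/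

import Mathlib

open MeasureTheory Filter Set Pointwise
open scoped ENNReal NNReal

noncomputable section

/-- The Frobenius norm of a real `q × p` matrix. -/
def frobNorm {q p : ℕ} (M : Matrix (Fin q) (Fin p) ℝ) : ℝ :=
  Real.sqrt (∑ i, ∑ j, (M i j) ^ 2)

/-- `C(π) = ∫ y xᵀ dπ(x,y)`, the entrywise integral of `(x,y) ↦ y xᵀ`. -/
def Cmat {p q : ℕ} (π : Measure ((Fin p → ℝ) × (Fin q → ℝ))) :
    Matrix (Fin q) (Fin p) ℝ :=
  Matrix.of fun i j => ∫ z, z.2 i * z.1 j ∂π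

/-- `∫ ⟨Mx, y⟩ dπ(x,y)` with the Euclidean inner product on `ℝ^q`. -/
def ipIntegral {p q : ℕ} (M : Matrix (Fin q) (Fin p) ℝ)
    (π : Measure ((Fin p → ℝ) × (Fin q → ℝ))) : ℝ :=
  ∫ z, ∑ i, ∑ j, M i j * z.1 j * z.2 i ∂π

/-- `M(π) = r·C(π)/‖C(π)‖_F` if `C(π) ≠ 0`, and `0` otherwise. -/
def Mopt {p q : ℕ} (r : ℝ) (π : Measure ((Fin p → ℝ) × (Fin q → ℝ))) :
    Matrix (Fin q) (Fin p) ℝ :=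
  if Cmat π = 0 then 0 else (r / frobNorm (Cmat π)) • Cmat π

/-- The Gromov–Wasserstein inner-product objective
`∫∫ (⟨x,x'⟩ − ⟨y,y'⟩)² dπ dπ`. -/
def gwObj {p q : ℕ} (π : Measure ((Fin p → ℝ) × (Fin q → ℝ))) : ℝ :=
  ∫ z, ∫ z', ((∑ j, z.1 j * z'.1 j) - (∑ i, z.2 i * z'.2 i)) ^ 2 ∂π ∂π

/-- The reduced objective `π ↦ min_{‖M‖_F ≤ r} −∫ ⟨Mx,y⟩ dπ`. -/
def redObj {p q : ℕ} (r : ℝ) (π : Measure ((Fin p → ℝ) × (Fin q → ℝ))) : ℝ :=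
  ⨅ M : {M : Matrix (Fin q) (Fin p) ℝ // frobNorm M ≤ r}, -(ipIntegral M.1 π)

set_option linter.unusedSectionVars false


section matalg
variable {p q : ℕ}

lemma frobNorm_nonneg (M : Matrix (Fin q) (Fin p) ℝ) : 0 ≤ frobNorm M :=
  Real.sqrt_nonneg _

lemma frobNorm_sq (M : Matrix (Fin q) (Fin p) ℝ) :
    frobNorm M ^ 2 = ∑ i, ∑ j, (M i j) ^ 2 :=
  Real.sq_sqrt (Finset.sum_nonneg fun _ _ => Finset.sum_nonneg fun _ _ => sq_nonneg _)

lemma frobNorm_zero : frobNorm (0 : Matrix (Fin q) (Fin p) ℝ) = 0 := by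
  simp [frobNorm]

lemma frobNorm_pos {M : Matrix (Fin q) (Fin p) ℝ} (h : M ≠ 0) : 0 < frobNorm M := by
  rcases (frobNorm_nonneg M).lt_or_eq with h' | h'
  · exact h'
  exfalso; apply h
  have hs : ∑ i, ∑ j, (M i j) ^ 2 = 0 := by
    have := frobNorm_sq M; rw [← h'] at this; simpa using this.symm
  ext i j
  have h1 : ∀ i ∈ (Finset.univ : Finset (Fin q)), ∑ j, (M i j) ^ 2 = 0 := by
    intro i _
    exact (Finset.sum_eq_zero_iff_of_nonneg (fun _ _ =>
      Finset.sum_nonneg fun _ _ => sq_nonneg _)).1 hs i (Finset.mem_univ i)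
  have h2 := (Finset.sum_eq_zero_iff_of_nonneg (fun _ _ => sq_nonneg _)).1
    (h1 i (Finset.mem_univ i)) j (Finset.mem_univ j)
  simpa using pow_eq_zero_iff (n := 2) (by norm_num) |>.1 h2

lemma frobNorm_smul (t : ℝ) (M : Matrix (Fin q) (Fin p) ℝ) :
    frobNorm (t • M) = |t| * frobNorm M := by
  unfold frobNorm
  have : ∀ i : Fin q, ∀ j : Fin p, ((t • M) i j) ^ 2 = t ^ 2 * (M i j) ^ 2 := by
    intro i j; simp [Matrix.smul_apply]; ring
  simp_rw [this, ← Finset.mul_sum]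
  rw [Real.sqrt_mul (sq_nonneg t), Real.sqrt_sq_eq_abs]

lemma frob_CS (M N : Matrix (Fin q) (Fin p) ℝ) :
    ∑ i, ∑ j, M i j * N i j ≤ frobNorm M * frobNorm N := by
  have flat : ∀ f : Fin q → Fin p → ℝ, ∑ i, ∑ j, f i j = ∑ x : Fin q × Fin p, f x.1 x.2 := by
    intro f; rw [Fintype.sum_prod_type]
  calc ∑ i, ∑ j, M i j * N i j ≤ |∑ i, ∑ j, M i j * N i j| := le_abs_self _
    _ = Real.sqrt ((∑ i, ∑ j, M i j * N i j) ^ 2) := (Real.sqrt_sq_eq_abs _).symm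
    _ ≤ Real.sqrt ((∑ i, ∑ j, (M i j) ^ 2) * ∑ i, ∑ j, (N i j) ^ 2) := by
        apply Real.sqrt_le_sqrt
        rw [flat (fun i j => M i j * N i j), flat (fun i j => (M i j) ^ 2),
          flat (fun i j => (N i j) ^ 2)]
        exact Finset.sum_mul_sq_le_sq_mul_sq _ _ _
    _ = frobNorm M * frobNorm N := by
        rw [Real.sqrt_mul (show (0:ℝ) ≤ ∑ i, ∑ j, (M i j) ^ 2 from Finset.sum_nonneg fun _ _ =>
          Finset.sum_nonneg fun _ _ => sq_nonneg _)]
        rfl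

end matalg

section aux
variable {p q : ℕ} {X : Set (Fin p → ℝ)} {Y : Set (Fin q → ℝ)}
  {π : Measure ((Fin p → ℝ) × (Fin q → ℝ))} [IsFiniteMeasure π]
  {R : ℝ}

lemma ae_memXY (hπ : π (X ×ˢ Y)ᶜ = 0) : ∀ᵐ z ∂π, z ∈ X ×ˢ Y := by
  rw [ae_iff]; simpa [Set.compl_def] using hπ

lemma integrable_of_bddXY (hπ : π (X ×ˢ Y)ᶜ = 0) {f : ((Fin p → ℝ) × (Fin q → ℝ)) → ℝ}
    (hf : Continuous f) {C : ℝ} (hC : ∀ z ∈ X ×ˢ Y, |f z| ≤ C) : Integrable f π :=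
  ⟨hf.aestronglyMeasurable,
    HasFiniteIntegral.of_bounded ((ae_memXY hπ).mono fun z hz => by
      simpa [Real.norm_eq_abs] using hC z hz)⟩

variable (hπ : π (X ×ˢ Y)ᶜ = 0) (hRX : ∀ x ∈ X, ‖x‖ ≤ R) (hRY : ∀ y ∈ Y, ‖y‖ ≤ R)

include hπ hRX in
lemma intXX (j j' : Fin p) : Integrable (fun z => z.1 j * z.1 j') π := by
  refine integrable_of_bddXY hπ (by fun_prop) (C := R * R) fun z hz => ?_
  rw [abs_mul]
  have h1 : |z.1 j| ≤ R := (norm_le_pi_norm z.1 j).trans (hRX _ hz.1)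
  have h2 : |z.1 j'| ≤ R := (norm_le_pi_norm z.1 j').trans (hRX _ hz.1)
  exact mul_le_mul h1 h2 (abs_nonneg _) ((abs_nonneg _).trans h1)

include hπ hRX hRY in
lemma intYX (i : Fin q) (j : Fin p) : Integrable (fun z => z.2 i * z.1 j) π := by
  refine integrable_of_bddXY hπ (by fun_prop) (C := R * R) fun z hz => ?_
  rw [abs_mul]
  have h1 : |z.2 i| ≤ R := (norm_le_pi_norm z.2 i).trans (hRY _ hz.2)
  have h2 : |z.1 j| ≤ R := (norm_le_pi_norm z.1 j).trans (hRX _ hz.1)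
  exact mul_le_mul h1 h2 (abs_nonneg _) ((abs_nonneg _).trans h1)

include hπ hRY in
lemma intYY (i i' : Fin q) : Integrable (fun z => z.2 i * z.2 i') π := by
  refine integrable_of_bddXY hπ (by fun_prop) (C := R * R) fun z hz => ?_
  rw [abs_mul]
  have h1 : |z.2 i| ≤ R := (norm_le_pi_norm z.2 i).trans (hRY _ hz.2)
  have h2 : |z.2 i'| ≤ R := (norm_le_pi_norm z.2 i').trans (hRY _ hz.2)
  exact mul_le_mul h1 h2 (abs_nonneg _) ((abs_nonneg _).trans h1)

end aux

section expand
variable {p q : ℕ}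

lemma sq_expand (a c : Fin p → ℝ) (b d : Fin q → ℝ) :
    ((∑ j, a j * c j) - ∑ i, b i * d i) ^ 2 =
      (∑ j, ∑ j', (a j * a j') * (c j * c j'))
        - 2 * (∑ i, ∑ j, (b i * a j) * (d i * c j))
        + (∑ i, ∑ i', (b i * b i') * (d i * d i')) := by
  have h1 : (∑ j, a j * c j) ^ 2 = ∑ j, ∑ j', (a j * a j') * (c j * c j') := by
    rw [sq, Finset.sum_mul_sum]
    exact Finset.sum_congr rfl fun j _ => Finset.sum_congr rfl fun j' _ => by ring
  have h2 : (∑ j, a j * c j) * (∑ i, b i * d i) = ∑ i, ∑ j, (b i * a j) * (d i * c j) := by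
    rw [Finset.sum_mul_sum, Finset.sum_comm]
    exact Finset.sum_congr rfl fun i _ => Finset.sum_congr rfl fun j _ => by ring
  have h3 : (∑ i, b i * d i) ^ 2 = ∑ i, ∑ i', (b i * b i') * (d i * d i') := by
    rw [sq, Finset.sum_mul_sum]
    exact Finset.sum_congr rfl fun i _ => Finset.sum_congr rfl fun i' _ => by ring
  linear_combination h1 - 2 * h2 + h3

end expand

def Amat {p q : ℕ} (π : Measure ((Fin p → ℝ) × (Fin q → ℝ))) :
    Matrix (Fin p) (Fin p) ℝ :=
  Matrix.of fun j j' => ∫ z, z.1 j * z.1 j' ∂π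

def Bmat {p q : ℕ} (π : Measure ((Fin p → ℝ) × (Fin q → ℝ))) :
    Matrix (Fin q) (Fin q) ℝ :=
  Matrix.of fun i i' => ∫ z, z.2 i * z.2 i' ∂π

section main
variable {p q : ℕ} {X : Set (Fin p → ℝ)} {Y : Set (Fin q → ℝ)}
  {π : Measure ((Fin p → ℝ) × (Fin q → ℝ))} [IsFiniteMeasure π]
  {R : ℝ}
  (hπ : π (X ×ˢ Y)ᶜ = 0) (hRX : ∀ x ∈ X, ‖x‖ ≤ R) (hRY : ∀ y ∈ Y, ‖y‖ ≤ R)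

include hπ hRX hRY

lemma inner_int (z : (Fin p → ℝ) × (Fin q → ℝ)) :
    ∫ z', ((∑ j, z.1 j * z'.1 j) - ∑ i, z.2 i * z'.2 i) ^ 2 ∂π
      = (∑ j, ∑ j', (z.1 j * z.1 j') * Amat π j j')
          - 2 * (∑ i, ∑ j, (z.2 i * z.1 j) * Cmat π i j)
          + (∑ i, ∑ i', (z.2 i * z.2 i') * Bmat π i i') := by
  have hfe : (fun z' : (Fin p → ℝ) × (Fin q → ℝ) =>
      ((∑ j, z.1 j * z'.1 j) - ∑ i, z.2 i * z'.2 i) ^ 2)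
      = fun z' => (∑ j, ∑ j', (z.1 j * z.1 j') * (z'.1 j * z'.1 j'))
          - 2 * (∑ i, ∑ j, (z.2 i * z.1 j) * (z'.2 i * z'.1 j))
          + (∑ i, ∑ i', (z.2 i * z.2 i') * (z'.2 i * z'.2 i')) :=
    funext fun z' => sq_expand z.1 z'.1 z.2 z'.2
  have iS1 : Integrable (fun z' : (Fin p → ℝ) × (Fin q → ℝ) =>
      ∑ j, ∑ j', (z.1 j * z.1 j') * (z'.1 j * z'.1 j')) π :=
    integrable_finset_sum _ fun j _ =>
      integrable_finset_sum _ fun j' _ => (intXX hπ hRX j j').const_mul _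
  have iS2 : Integrable (fun z' : (Fin p → ℝ) × (Fin q → ℝ) =>
      ∑ i, ∑ j, (z.2 i * z.1 j) * (z'.2 i * z'.1 j)) π :=
    integrable_finset_sum _ fun i _ =>
      integrable_finset_sum _ fun j _ => (intYX hπ hRX hRY i j).const_mul _
  have iS3 : Integrable (fun z' : (Fin p → ℝ) × (Fin q → ℝ) =>
      ∑ i, ∑ i', (z.2 i * z.2 i') * (z'.2 i * z'.2 i')) π :=
    integrable_finset_sum _ fun i _ =>
      integrable_finset_sum _ fun i' _ => (intYY hπ hRY i i').const_mul _
  have iS12 : Integrable (fun z' : (Fin p → ℝ) × (Fin q → ℝ) =>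
      (∑ j, ∑ j', (z.1 j * z.1 j') * (z'.1 j * z'.1 j'))
        - 2 * ∑ i, ∑ j, (z.2 i * z.1 j) * (z'.2 i * z'.1 j)) π := iS1.sub (iS2.const_mul 2)
  rw [hfe, integral_add iS12 iS3, integral_sub iS1 (iS2.const_mul 2), integral_const_mul]
  congr 1
  · congr 1
    · rw [integral_finset_sum _ fun j _ =>
        integrable_finset_sum _ fun j' _ => (intXX hπ hRX j j').const_mul _]
      refine Finset.sum_congr rfl fun j _ => ?_
      rw [integral_finset_sum _ fun j' _ => (intXX hπ hRX j j').const_mul _]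
      exact Finset.sum_congr rfl fun j' _ => by rw [integral_const_mul]; rfl
    · congr 1
      rw [integral_finset_sum _ fun i _ =>
        integrable_finset_sum _ fun j _ => (intYX hπ hRX hRY i j).const_mul _]
      refine Finset.sum_congr rfl fun i _ => ?_
      rw [integral_finset_sum _ fun j _ => (intYX hπ hRX hRY i j).const_mul _]
      exact Finset.sum_congr rfl fun j _ => by rw [integral_const_mul]; rfl
  · rw [integral_finset_sum _ fun i _ =>
      integrable_finset_sum _ fun i' _ => (intYY hπ hRY i i').const_mul _]
    refine Finset.sum_congr rfl fun i _ => ?_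
    rw [integral_finset_sum _ fun i' _ => (intYY hπ hRY i i').const_mul _]
    exact Finset.sum_congr rfl fun i' _ => by rw [integral_const_mul]; rfl

end main

section main2
variable {p q : ℕ} {X : Set (Fin p → ℝ)} {Y : Set (Fin q → ℝ)}
  {π : Measure ((Fin p → ℝ) × (Fin q → ℝ))} [IsFiniteMeasure π]
  {R : ℝ}
  (hπ : π (X ×ˢ Y)ᶜ = 0) (hRX : ∀ x ∈ X, ‖x‖ ≤ R) (hRY : ∀ y ∈ Y, ‖y‖ ≤ R)

include hπ hRX hRY

lemma gwObj_eq :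
    gwObj π = (∑ j, ∑ j', (Amat π j j') ^ 2)
        - 2 * (∑ i, ∑ j, (Cmat π i j) ^ 2)
        + (∑ i, ∑ i', (Bmat π i i') ^ 2) := by
  have hfe : (fun z : (Fin p → ℝ) × (Fin q → ℝ) =>
      ∫ z', ((∑ j, z.1 j * z'.1 j) - ∑ i, z.2 i * z'.2 i) ^ 2 ∂π)
      = fun z => (∑ j, ∑ j', (z.1 j * z.1 j') * Amat π j j')
          - 2 * (∑ i, ∑ j, (z.2 i * z.1 j) * Cmat π i j)
          + (∑ i, ∑ i', (z.2 i * z.2 i') * Bmat π i i') :=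
    funext fun z => inner_int hπ hRX hRY z
  have jS1 : Integrable (fun z : (Fin p → ℝ) × (Fin q → ℝ) =>
      ∑ j, ∑ j', (z.1 j * z.1 j') * Amat π j j') π :=
    integrable_finset_sum _ fun j _ =>
      integrable_finset_sum _ fun j' _ => (intXX hπ hRX j j').mul_const _
  have jS2 : Integrable (fun z : (Fin p → ℝ) × (Fin q → ℝ) =>
      ∑ i, ∑ j, (z.2 i * z.1 j) * Cmat π i j) π :=
    integrable_finset_sum _ fun i _ =>
      integrable_finset_sum _ fun j _ => (intYX hπ hRX hRY i j).mul_const _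
  have jS3 : Integrable (fun z : (Fin p → ℝ) × (Fin q → ℝ) =>
      ∑ i, ∑ i', (z.2 i * z.2 i') * Bmat π i i') π :=
    integrable_finset_sum _ fun i _ =>
      integrable_finset_sum _ fun i' _ => (intYY hπ hRY i i').mul_const _
  have jS12 : Integrable (fun z : (Fin p → ℝ) × (Fin q → ℝ) =>
      (∑ j, ∑ j', (z.1 j * z.1 j') * Amat π j j')
        - 2 * ∑ i, ∑ j, (z.2 i * z.1 j) * Cmat π i j) π := jS1.sub (jS2.const_mul 2)
  rw [gwObj, hfe, integral_add jS12 jS3, integral_sub jS1 (jS2.const_mul 2), integral_const_mul]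
  congr 1
  · congr 1
    · refine (integral_finset_sum _ fun j _ =>
        integrable_finset_sum _ fun j' _ => (intXX hπ hRX j j').mul_const _).trans ?_
      refine Finset.sum_congr rfl fun j _ => ?_
      refine (integral_finset_sum _ fun j' _ => (intXX hπ hRX j j').mul_const _).trans ?_
      exact Finset.sum_congr rfl fun j' _ => by rw [integral_mul_const, sq]; rfl
    · congr 1
      refine (integral_finset_sum _ fun i _ =>
        integrable_finset_sum _ fun j _ => (intYX hπ hRX hRY i j).mul_const _).trans ?_
      refine Finset.sum_congr rfl fun i _ => ?_
      refine (integral_finset_sum _ fun j _ => (intYX hπ hRX hRY i j).mul_const _).trans ?_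
      exact Finset.sum_congr rfl fun j _ => by rw [integral_mul_const, sq]; rfl
  · refine (integral_finset_sum _ fun i _ =>
      integrable_finset_sum _ fun i' _ => (intYY hπ hRY i i').mul_const _).trans ?_
    refine Finset.sum_congr rfl fun i _ => ?_
    refine (integral_finset_sum _ fun i' _ => (intYY hπ hRY i i').mul_const _).trans ?_
    exact Finset.sum_congr rfl fun i' _ => by rw [integral_mul_const, sq]; rfl

lemma ipIntegral_eq (M : Matrix (Fin q) (Fin p) ℝ) :
    ipIntegral M π = ∑ i, ∑ j, M i j * Cmat π i j := by
  have h : (fun z : (Fin p → ℝ) × (Fin q → ℝ) => ∑ i, ∑ j, M i j * z.1 j * z.2 i)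
      = fun z => ∑ i, ∑ j, M i j * (z.2 i * z.1 j) :=
    funext fun z => Finset.sum_congr rfl fun i _ => Finset.sum_congr rfl fun j _ => by ring
  rw [ipIntegral, h]
  refine (integral_finset_sum _ fun i _ =>
    integrable_finset_sum _ fun j _ => (intYX hπ hRX hRY i j).const_mul _).trans ?_
  refine Finset.sum_congr rfl fun i _ => ?_
  refine (integral_finset_sum _ fun j _ => (intYX hπ hRX hRY i j).const_mul _).trans ?_
  exact Finset.sum_congr rfl fun j _ => by rw [integral_const_mul]; rfl

lemma redObj_eq (r : ℝ) (hr : 0 < r) :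
    redObj r π = -(r * frobNorm (Cmat π)) := by
  haveI : Nonempty {M : Matrix (Fin q) (Fin p) ℝ // frobNorm M ≤ r} :=
    ⟨⟨0, by rw [frobNorm_zero]; exact hr.le⟩⟩
  set c := Cmat π with hc
  have hM : ∀ M : {M : Matrix (Fin q) (Fin p) ℝ // frobNorm M ≤ r},
      -(r * frobNorm c) ≤ -(ipIntegral M.1 π) := by
    intro M
    rw [ipIntegral_eq hπ hRX hRY]
    apply neg_le_neg
    calc ∑ i, ∑ j, M.1 i j * c i j ≤ frobNorm M.1 * frobNorm c := frob_CS _ _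
      _ ≤ r * frobNorm c := mul_le_mul_of_nonneg_right M.2 (frobNorm_nonneg c)
  have hbdd : BddBelow (Set.range fun M : {M : Matrix (Fin q) (Fin p) ℝ // frobNorm M ≤ r} =>
      -(ipIntegral M.1 π)) := ⟨-(r * frobNorm c), by rintro x ⟨M, rfl⟩; exact hM M⟩
  apply le_antisymm
  · by_cases h0 : c = 0
    · have hz : (0 : Matrix (Fin q) (Fin p) ℝ) ∈ {M | frobNorm M ≤ r} := by
        simp [frobNorm_zero]; exact hr.le
      refine le_trans (ciInf_le hbdd ⟨0, hz⟩) ?_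
      rw [ipIntegral_eq hπ hRX hRY, ← hc, h0]
      simp [frobNorm_zero]
    · have hcpos : 0 < frobNorm c := frobNorm_pos h0
      have hMr : frobNorm ((r / frobNorm c) • c) ≤ r := by
        rw [frobNorm_smul, abs_of_pos (div_pos hr hcpos)]
        rw [div_mul_cancel₀ _ hcpos.ne']
      refine le_trans (ciInf_le hbdd ⟨(r / frobNorm c) • c, hMr⟩) ?_
      rw [ipIntegral_eq hπ hRX hRY, ← hc]
      have hsum : ∑ i, ∑ j, ((r / frobNorm c) • c) i j * c i j
          = (r / frobNorm c) * ∑ i, ∑ j, (c i j) ^ 2 := by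
        rw [Finset.mul_sum]
        refine Finset.sum_congr rfl fun i _ => ?_
        rw [Finset.mul_sum]
        exact Finset.sum_congr rfl fun j _ => by simp [Matrix.smul_apply]; ring
      rw [hsum, ← frobNorm_sq, sq, ← mul_assoc, div_mul_cancel₀ _ hcpos.ne']
  · exact le_ciInf hM

end main2

lemma Amat_marg {p q : ℕ} {π : Measure ((Fin p → ℝ) × (Fin q → ℝ))}
    {α : Measure (Fin p → ℝ)} (h1 : π.map Prod.fst = α) (j j' : Fin p) :
    Amat π j j' = ∫ x, x j * x j' ∂α := by
  rw [← h1, integral_map measurable_fst.aemeasurable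
    (Continuous.aestronglyMeasurable (by fun_prop))]
  rfl

lemma Bmat_marg {p q : ℕ} {π : Measure ((Fin p → ℝ) × (Fin q → ℝ))}
    {β : Measure (Fin q → ℝ)} (h2 : π.map Prod.snd = β) (i i' : Fin q) :
    Bmat π i i' = ∫ y, y i * y i' ∂β := by
  rw [← h2, integral_map measurable_snd.aemeasurable
    (Continuous.aestronglyMeasurable (by fun_prop))]
  rfl

/-- **Equivalence of GW-IP and cost-regularized OT** (Proposition on GW-IP). A coupling
`π* ∈ Π(α,β)` minimizes the Gromov–Wasserstein inner-product problem if and only if it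
minimizes `π ↦ min_{M ∈ F_r} −∫ ⟨Mx,y⟩ dπ` over `Π(α,β)`. -/
theorem stmt7 {p q : ℕ}
    (X : Set (Fin p → ℝ)) (Y : Set (Fin q → ℝ))
    (hX : IsCompact X) (hY : IsCompact Y)
    (α : Measure (Fin p → ℝ)) (β : Measure (Fin q → ℝ))
    [IsFiniteMeasure α] [IsFiniteMeasure β]
    (hαsupp : α Xᶜ = 0) (hβsupp : β Yᶜ = 0)
    (hmass : α Set.univ = β Set.univ) (hαpos : α ≠ 0)
    (r : ℝ) (hr : 0 < r)
    (πstar : Measure ((Fin p → ℝ) × (Fin q → ℝ))) [IsFiniteMeasure πstar]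
    (hπ₁ : πstar.map Prod.fst = α) (hπ₂ : πstar.map Prod.snd = β) :
    ((∀ π : Measure ((Fin p → ℝ) × (Fin q → ℝ)), IsFiniteMeasure π →
        π.map Prod.fst = α → π.map Prod.snd = β → gwObj πstar ≤ gwObj π) ↔
      (∀ π : Measure ((Fin p → ℝ) × (Fin q → ℝ)), IsFiniteMeasure π →
        π.map Prod.fst = α → π.map Prod.snd = β → redObj r πstar ≤ redObj r π)) := by

  obtain ⟨R₁, hR₁⟩ := hX.isBounded.exists_norm_le
  obtain ⟨R₂, hR₂⟩ := hY.isBounded.exists_norm_le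
  set R := max R₁ R₂ with hRdef
  have hRX : ∀ x ∈ X, ‖x‖ ≤ R := fun x hx => (hR₁ x hx).trans (le_max_left _ _)
  have hRY : ∀ y ∈ Y, ‖y‖ ≤ R := fun y hy => (hR₂ y hy).trans (le_max_right _ _)
  have hXm : MeasurableSet Xᶜ := hX.isClosed.measurableSet.compl
  have hYm : MeasurableSet Yᶜ := hY.isClosed.measurableSet.compl
  have hsupp : ∀ (π : Measure ((Fin p → ℝ) × (Fin q → ℝ))),
      π.map Prod.fst = α → π.map Prod.snd = β → π (X ×ˢ Y)ᶜ = 0 := by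
    intro π h1 h2
    have hsub : (X ×ˢ Y)ᶜ ⊆ (Prod.fst ⁻¹' Xᶜ) ∪ (Prod.snd ⁻¹' Yᶜ) := by
      intro z hz
      simp only [Set.mem_compl_iff, Set.mem_prod, not_and_or] at hz
      simpa using hz
    refine measure_mono_null hsub (measure_union_null ?_ ?_)
    · rw [← Measure.map_apply measurable_fst hXm, h1]; exact hαsupp
    · rw [← Measure.map_apply measurable_snd hYm, h2]; exact hβsupp
  have hπs := hsupp πstar hπ₁ hπ₂
  constructor
  · intro h π hfin h1 h2
    haveI := hfin
    have hπn := hsupp π h1 h2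
    have hg := h π hfin h1 h2
    rw [gwObj_eq hπs hRX hRY, gwObj_eq hπn hRX hRY] at hg
    have hAs : ∑ j, ∑ j', (Amat πstar j j') ^ 2 = ∑ j, ∑ j', (Amat π j j') ^ 2 :=
      Finset.sum_congr rfl fun j _ => Finset.sum_congr rfl fun j' _ => by
        rw [Amat_marg hπ₁, Amat_marg h1]
    have hBs : ∑ i, ∑ i', (Bmat πstar i i') ^ 2 = ∑ i, ∑ i', (Bmat π i i') ^ 2 :=
      Finset.sum_congr rfl fun i _ => Finset.sum_congr rfl fun i' _ => by
        rw [Bmat_marg hπ₂, Bmat_marg h2]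
    have hCle : ∑ i, ∑ j, (Cmat π i j) ^ 2 ≤ ∑ i, ∑ j, (Cmat πstar i j) ^ 2 := by
      linarith
    have hfle : frobNorm (Cmat π) ≤ frobNorm (Cmat πstar) := by
      unfold frobNorm; exact Real.sqrt_le_sqrt hCle
    rw [redObj_eq hπs hRX hRY r hr, redObj_eq hπn hRX hRY r hr]
    exact neg_le_neg (mul_le_mul_of_nonneg_left hfle hr.le)
  · intro h π hfin h1 h2
    haveI := hfin
    have hπn := hsupp π h1 h2
    have hg := h π hfin h1 h2
    rw [redObj_eq hπs hRX hRY r hr, redObj_eq hπn hRX hRY r hr] at hg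
    have hfle : frobNorm (Cmat π) ≤ frobNorm (Cmat πstar) :=
      le_of_mul_le_mul_left (neg_le_neg_iff.mp hg) hr
    have hCle : ∑ i, ∑ j, (Cmat π i j) ^ 2 ≤ ∑ i, ∑ j, (Cmat πstar i j) ^ 2 := by
      have := pow_le_pow_left₀ (frobNorm_nonneg _) hfle 2
      rwa [frobNorm_sq, frobNorm_sq] at this
    rw [gwObj_eq hπs hRX hRY, gwObj_eq hπn hRX hRY]
    have hAs : ∑ j, ∑ j', (Amat πstar j j') ^ 2 = ∑ j, ∑ j', (Amat π j j') ^ 2 :=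
      Finset.sum_congr rfl fun j _ => Finset.sum_congr rfl fun j' _ => by
        rw [Amat_marg hπ₁, Amat_marg h1]
    have hBs : ∑ i, ∑ i', (Bmat πstar i i') ^ 2 = ∑ i, ∑ i', (Bmat π i i') ^ 2 :=
      Finset.sum_congr rfl fun i _ => Finset.sum_congr rfl fun i' _ => by
        rw [Bmat_marg hπ₂, Bmat_marg h2]
    linarith
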